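/- Let M be a right pseudocompact B-module, V ⊆ M a K-subspace, and e an idempotent of B with Ve ⊆ V. Then the closure of Ve equals (closure of V)·e. -/

import Mathlib

open MulOpposite

/-- A pseudocompact algebra: complete Hausdorff topological algebra with a basis of
neighborhoods of zero consisting of open two-sided ideals of finite codimension over `K`. -/
def IsPseudocompactAlgebra (K B : Type*) [Field K] [Ring B] [Algebra K B]
    [UniformSpace B] : Prop :=
  CompleteSpace B ∧ T2Space B ∧
    ∀ U ∈ nhds (0 : B), ∃ I : TwoSidedIdeal B, ∃ W : Submodule K B,
      (W : Set B) = (I : Set B) ∧ (W : Set B) ⊆ U ∧ IsOpen (W : Set B) ∧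
        FiniteDimensional K (B ⧸ W)

/-- A pseudocompact module over `R` (for right `B`-modules take `R = Bᵐᵒᵖ`):
complete Hausdorff linearly topologized module with a basis of neighborhoods of zero
consisting of open submodules of finite codimension over `K`. -/
def IsPseudocompactModule (K R M : Type*) [Field K] [Ring R] [AddCommGroup M]
    [Module R M] [Module K M] [UniformSpace M] : Prop :=
  CompleteSpace M ∧ T2Space M ∧
    ∀ U ∈ nhds (0 : M), ∃ N : Submodule R M, ∃ W : Submodule K M,
      (W : Set M) = (N : Set M) ∧ (W : Set M) ⊆ U ∧ IsOpen (W : Set M) ∧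
        FiniteDimensional K (M ⧸ W)


/-- for a right pseudocompact `B`-module `M`, a `K`-subspace `V` with
`V·e ⊆ V` for an idempotent `e` of `B`, the closure of `V·e` equals `(closure V)·e`. -/
theorem closure_smul_idempotent
    (K B : Type*) [Field K] [Ring B] [Algebra K B] [UniformSpace B]
    [IsTopologicalRing B] (hB : IsPseudocompactAlgebra K B)
    (M : Type*) [AddCommGroup M] [Module Bᵐᵒᵖ M] [Module K M] [UniformSpace M]
    [IsTopologicalAddGroup M] [ContinuousSMul Bᵐᵒᵖ M]
    (hM : IsPseudocompactModule K Bᵐᵒᵖ M)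
    (e : B) (he : IsIdempotentElem e)
    (V : Submodule K M) (hVe : ∀ v ∈ V, (MulOpposite.op e) • v ∈ V) :
    closure ((fun m : M => (MulOpposite.op e) • m) '' (V : Set M)) =
      (fun m : M => (MulOpposite.op e) • m) '' closure (V : Set M) := by
  obtain ⟨-, hT2, -⟩ := hM
  set f : M → M := fun m => (MulOpposite.op e) • m with hf
  have hcont : Continuous f := continuous_id.const_smul (MulOpposite.op e)
  have hfix : ∀ m, f (f m) = f m := by
    intro m
    simp only [hf, smul_smul, ← MulOpposite.op_mul, he.eq]
  apply Set.Subset.antisymm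
  · -- closure (f '' V) ⊆ closure V ∩ {m | f m = m}, and pts there are in f '' closure V
    have h1 : closure (f '' (V : Set M)) ⊆ closure (V : Set M) :=
      closure_mono (by rintro _ ⟨v, hv, rfl⟩; exact hVe v hv)
    have h2 : closure (f '' (V : Set M)) ⊆ {m | f m = m} := by
      apply closure_minimal
      · rintro _ ⟨v, hv, rfl⟩; exact hfix v
      · exact isClosed_eq hcont continuous_id
    intro x hx
    exact ⟨x, h1 hx, h2 hx⟩
  · exact image_closure_subset_closure_image hcont
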